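/- If G ≅ C_p^δ is an elementary abelian p-group of rank δ, then C(G) ≤ (5/3)·√|G|, with equality if and only if G ≅ C_2 × C_2. Moreover, C(C_p^δ) = Σ_{0≤i≤δ−1} p^δ/(p^δ − p^i). -/

import Mathlib

/-!
Definitions supporting the formalization of
"An upper bound on the Chebotarev invariant of a finite group" (Lucchini–Tracey).
-/

open scoped BigOperators

namespace ChebotarevPaper

/-- A `k`-tuple of elements of `G` invariably generates `G` if, replacing each entry by an
arbitrary conjugate, the resulting elements always generate `G`. -/
def InvGen (G : Type*) [Group G] {k : ℕ} (f : Fin k → G) : Prop :=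
  ∀ c : Fin k → G, Subgroup.closure (Set.range fun i => c i * f i * (c i)⁻¹) = ⊤

/-- The probability that `k` independent uniformly random elements of `G` invariably
generate `G`. -/
noncomputable def probInvGen (G : Type*) [Group G] (k : ℕ) : ℝ :=
  Nat.card {f : Fin k → G // InvGen G f} / (Nat.card G : ℝ) ^ k

/-- The Chebotarev invariant `C(G)`:  `C(G) = Σ_{k ≥ 0} (1 − P_I(G,k))`, where `P_I(G,k)`
is the probability that `k` independent uniformly random elements of `G` invariably
generate `G`. -/
noncomputable def cheb (G : Type*) [Group G] : ℝ :=
  ∑' k : ℕ, (1 - probInvGen G k)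

/-- The probability that `k` independent uniformly random elements of `G` generate `G`. -/
noncomputable def probGen (G : Type*) [Group G] (k : ℕ) : ℝ :=
  Nat.card {f : Fin k → G // Subgroup.closure (Set.range f) = ⊤} / (Nat.card G : ℝ) ^ k

/-- The expected number of uniformly random elements of `G` needed to generate `G`. -/
noncomputable def expectedGen (G : Type*) [Group G] : ℝ :=
  ∑' k : ℕ, (1 - probGen G k)

/-- `d(G)`: the minimal number of generators of `G`. -/
noncomputable def minGen (G : Type*) [Group G] : ℕ :=
  sInf {n | ∃ f : Fin n → G, Subgroup.closure (Set.range f) = ⊤}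

/-- `σ` has the defining property of the constant `σ = 2.118456563…` of Pomerance:
for every finite group `X`, the expected number of uniformly random elements needed to
generate `X` is at most `d(X) + σ`. -/
def IsPomeranceConst (σ : ℝ) : Prop :=
  ∀ (X : Type) [Group X] [Finite X], expectedGen X ≤ minGen X + σ

variable (G : Type*) [Group G]

/-- `(X, Y)` is a chief factor of `G`:  both are normal in `G`, `Y < X`, and no normal
subgroup of `G` lies strictly between them (i.e. `X/Y` is a minimal normal subgroup of
`G/Y`). -/
def IsChiefFactorPair (X Y : Subgroup G) : Prop :=
  X.Normal ∧ Y.Normal ∧ Y < X ∧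
    ∀ N : Subgroup G, N.Normal → Y ≤ N → N ≤ X → N = Y ∨ N = X

/-- The chief factor `X/Y` is complemented: there is `U ≤ G` with `UX = G` and
`U ⊓ X = Y`. -/
def IsComplementedFactor (X Y : Subgroup G) : Prop :=
  ∃ U : Subgroup G, U ⊔ X = ⊤ ∧ U ⊓ X = Y

/-- The chief factor `X/Y` is a Frattini chief factor, i.e. `X/Y ≤ Frat(G/Y)`;
equivalently (and this is how we state it), `X/Y` is abelian and has no complement
in `G`. -/
def IsFrattiniFactor (X Y : Subgroup G) : Prop :=
  (∀ a b : G, a ∈ X → b ∈ X → a * b * a⁻¹ * b⁻¹ ∈ Y) ∧ ¬ IsComplementedFactor G X Y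

/-- The chief factor `X/Y` is central in `G`, i.e. `X/Y ≤ Z(G/Y)`. -/
def IsCentralFactor (X Y : Subgroup G) : Prop :=
  ∀ g x : G, x ∈ X → g * x * g⁻¹ * x⁻¹ ∈ Y

/-- The `G`-group `V` (a group with an action `a : G →* MulAut V` of `G` by automorphisms)
is `G`-isomorphic to the chief factor `X/Y` (on which `G` acts by conjugation): there is a
surjective homomorphism `X →* V` with kernel `Y` transforming conjugation by `g ∈ G` into
the action of `g` on `V`. -/
def RepresentsFactor {V : Type*} [Group V] (a : G →* MulAut V) (X Y : Subgroup G) : Prop :=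
  ∃ f : X →* V, Function.Surjective f ∧ (∀ x : X, f x = 1 ↔ (x : G) ∈ Y) ∧
    ∀ (g : G) (x y : X), (y : G) = g * (x : G) * g⁻¹ → f y = a g (f x)

/-- Two `G`-groups `(V₁, a₁)`, `(V₂, a₂)` are `G`-equivalent: there are isomorphisms
`φ : V₁ ≃* V₂` and `Φ : V₁ ⋊ G ≃* V₂ ⋊ G` making the natural diagram of the two
extensions `1 → Vᵢ → Vᵢ ⋊ G → G → 1` commute. -/
def GEquiv {V₁ V₂ : Type*} [Group V₁] [Group V₂]
    (a₁ : G →* MulAut V₁) (a₂ : G →* MulAut V₂) : Prop :=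
  ∃ (φ : V₁ ≃* V₂) (Φ : (V₁ ⋊[a₁] G) ≃* (V₂ ⋊[a₂] G)),
    (∀ v : V₁, Φ (SemidirectProduct.inl v) = SemidirectProduct.inl (φ v)) ∧
    ∀ x, (Φ x).right = x.right

/-- `G`-isomorphism of `G`-groups. -/
def GIso {V₁ V₂ : Type*} [Group V₁] [Group V₂]
    (a₁ : G →* MulAut V₁) (a₂ : G →* MulAut V₂) : Prop :=
  ∃ φ : V₁ ≃* V₂, ∀ (g : G) (v : V₁), φ (a₁ g v) = a₂ g (φ v)

/-- `N` is a minimal normal subgroup of `G`. -/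
def IsMinimalNormal (N : Subgroup G) : Prop :=
  N.Normal ∧ N ≠ ⊥ ∧ ∀ M : Subgroup G, M.Normal → M ≠ ⊥ → M ≤ N → M = N

/-- The socle of `G`: the subgroup generated by all minimal normal subgroups of `G`. -/
def socle : Subgroup G := sSup {N : Subgroup G | IsMinimalNormal G N}

instance socle_normal : (socle G).Normal := by
  constructor
  intro n hn g
  have h : socle G ≤ (socle G).comap (MulAut.conj g).toMonoidHom := by
    rw [socle]
    apply sSup_le
    intro N hN x hx
    have h1 : (MulAut.conj g).toMonoidHom x ∈ N := by
      simpa [MulAut.conj_apply] using hN.1.conj_mem x hx g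
    exact Subgroup.mem_comap.2 (le_sSup hN h1)
  have h2 := h hn
  simpa [MulAut.conj_apply] using h2

/-- The action of `G` (by conjugation, through `f : G →* Q`) on the socle of `Q`. -/
def socAct {Q : Type*} [Group Q] (f : G →* Q) : G →* MulAut (socle Q) :=
  MulAut.conjNormal.comp f

/-- The diagonal action of `G` on `V × V` induced by an action on `V`. -/
def prodAct {V : Type*} [Group V] (a : G →* MulAut V) : G →* MulAut (V × V) where
  toFun g := MulEquiv.prodCongr (a g) (a g)
  map_one' := by
    ext x <;> simp [MulEquiv.prodCongr, MulAut.one_apply]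
  map_mul' g h := by
    ext x <;> simp [MulEquiv.prodCongr, MulAut.mul_apply]

/-- The diagonal action of `H` on `V^u` induced by an action on `V`. -/
def diagAct (H : Type*) [Group H] {V : Type*} [Group V] (b : H →* MulAut V) (u : ℕ) :
    H →* MulAut (Fin u → V) where
  toFun g := MulEquiv.piCongrRight fun _ => b g
  map_one' := by
    ext x i; simp
  map_mul' g h := by
    ext x i; simp [MulAut.mul_apply]

variable {G}

/-- The elements `gs 0, …, gs (k-1)` of `G` satisfy the `V`-property in `G`: they all lie
in the union of the `G`-conjugates of some maximal subgroup `M` of `G` such that the socle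
of `G/core_G(M)` is `G`-equivalent to `V` or to `V × V`. -/
def SatisfyVProperty {V : Type*} [Group V] (a : G →* MulAut V) {k : ℕ}
    (gs : Fin k → G) : Prop :=
  ∃ M : Subgroup G, IsCoatom M ∧
    (GEquiv G (socAct G (QuotientGroup.mk' M.normalCore)) a ∨
      GEquiv G (socAct G (QuotientGroup.mk' M.normalCore)) (prodAct G a)) ∧
    ∀ i, ∃ x : G, x * gs i * x⁻¹ ∈ M

/-- `P*_{G,V}(k)`: the probability that `k` independent uniformly random elements of `G`
satisfy the `V`-property in `G`. -/
noncomputable def pStar {V : Type*} [Group V] (a : G →* MulAut V) (k : ℕ) : ℝ :=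
  Nat.card {gs : Fin k → G // SatisfyVProperty a gs} / (Nat.card G : ℝ) ^ k

/-- The collection of normal subgroups `N` of `G` such that `G/N` is isomorphic to the
monolithic primitive group `L_V` associated to `V` (that is, `V ⋊ (G/C_G(V))` if `V` is
abelian and `G/C_G(V)` otherwise; here `C_G(V)` is the kernel of the action of `G` on
`V`) and the socle of `G/N` is `G`-equivalent to `V`. -/
def crownNormals {V : Type*} [Group V] (a : G →* MulAut V) : Set (Subgroup G) :=
  {N | ∃ _ : N.Normal,
    ((∀ x y : V, x * y = y * x) →
      Nonempty ((G ⧸ N) ≃* (V ⋊[QuotientGroup.kerLift a] (G ⧸ a.ker)))) ∧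
    (¬ (∀ x y : V, x * y = y * x) → Nonempty ((G ⧸ N) ≃* (G ⧸ a.ker))) ∧
    GEquiv G (socAct G (QuotientGroup.mk' N)) a}

/-- `R_G(V)`: the intersection of all normal subgroups `N` of `G` with `G/N ≅ L_V` and
`soc(G/N)` `G`-equivalent to `V`. -/
def crownRadical {V : Type*} [Group V] (a : G →* MulAut V) : Subgroup G :=
  sInf (crownNormals a)

instance crownRadical_normal {V : Type*} [Group V] (a : G →* MulAut V) :
    (crownRadical a).Normal := by
  constructor
  intro n hn g
  rw [crownRadical, Subgroup.mem_sInf] at hn ⊢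
  intro p hp
  obtain ⟨hpN, hrest⟩ := hp
  exact hpN.conj_mem n (hn p ⟨hpN, hrest⟩) g

/-- `I_G(V)`: the preimage in `G` of the socle of `G/R_G(V)`; the `V`-crown of `G` is
`I_G(V)/R_G(V)`. -/
def crownSocle {V : Type*} [Group V] (a : G →* MulAut V) : Subgroup G :=
  (socle (G ⧸ crownRadical a)).comap (QuotientGroup.mk' (crownRadical a))

/-- A chief series of `G`: a chain `⊥ = N_0 < N_1 < … < N_len = ⊤` of normal subgroups
of `G` in which each factor `N_{i+1}/N_i` is a chief factor of `G`. -/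
structure ChiefSeries (G : Type*) [Group G] where
  len : ℕ
  ser : Fin (len + 1) → Subgroup G
  bot_eq : ser 0 = ⊥
  top_eq : ser (Fin.last len) = ⊤
  chief : ∀ i : Fin len, IsChiefFactorPair G (ser i.succ) (ser i.castSucc)

/-- `δ_V(G)` (for a `G`-module `V`): the number of complemented factors in the chief
series `S` of `G` which are `G`-isomorphic to `V`. -/
noncomputable def deltaIso {V : Type*} [Group V] (a : G →* MulAut V)
    (S : ChiefSeries G) : ℕ :=
  Nat.card {i : Fin S.len //
    IsComplementedFactor G (S.ser i.succ) (S.ser i.castSucc) ∧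
    RepresentsFactor G a (S.ser i.succ) (S.ser i.castSucc)}

/-- The chief factor `X/Y` of `G` is `G`-equivalent to the `G`-group `(V, a)`. -/
def FactorGEquiv (X Y : Subgroup G) {V : Type*} [Group V] (a : G →* MulAut V) : Prop :=
  ∃ (W : Type) (_ : Group W) (b : G →* MulAut W),
    RepresentsFactor G b X Y ∧ GEquiv G b a

/-- `δ_V(G)` (for a `G`-group `V`): the number of non-Frattini factors in the chief
series `S` of `G` which are `G`-equivalent to `V`. -/
noncomputable def deltaEquiv {V : Type*} [Group V] (a : G →* MulAut V)
    (S : ChiefSeries G) : ℕ :=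
  Nat.card {i : Fin S.len //
    ¬ IsFrattiniFactor G (S.ser i.succ) (S.ser i.castSucc) ∧
    FactorGEquiv (S.ser i.succ) (S.ser i.castSucc) a}

/-- Bundled `G`-group: a group together with an action of `G` by automorphisms. -/
structure GGroup (G : Type) [Group G] : Type 1 where
  carrier : Type
  [grp : Group carrier]
  act : G →* MulAut carrier

attribute [instance] GGroup.grp

/-- The action `b` of `H` on `V` is irreducible: `V` is nontrivial and has no proper
nontrivial (normal) `H`-invariant subgroup. -/
def IsIrreducibleGGroup (H : Type*) [Group H] {V : Type*} [Group V]
    (b : H →* MulAut V) : Prop :=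
  Nontrivial V ∧
    ∀ W : Subgroup V, W.Normal → (∀ (h : H) (v : V), v ∈ W → b h v ∈ W) → W = ⊥ ∨ W = ⊤

/-- The `H`-equivariant endomorphisms of `V` (for `H`-modules `V` this is
`End_H(V)`). -/
def EquivEnd (H : Type*) [Group H] {V : Type*} [Group V] (b : H →* MulAut V) :=
  {f : V →* V // ∀ (h : H) (v : V), f (b h v) = b h (f v)}

/-- `q_V := |End_H(V)|`. -/
noncomputable def endCard (H : Type*) [Group H] {V : Type*} [Group V]
    (b : H →* MulAut V) : ℕ :=
  Nat.card (EquivEnd H b)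

/-- `n_V := dim_{End_H(V)} V`, characterised by `|End_H(V)| ^ n_V = |V|` (for a finite
irreducible `H`-module `V`, `End_H(V)` is a field and `V` a vector space over it). -/
noncomputable def dimEnd (H : Type*) [Group H] {V : Type*} [Group V]
    (b : H →* MulAut V) : ℕ :=
  sInf {n : ℕ | endCard H b ^ n = Nat.card V}

/-- The set of derivations `ζ : H → V` (satisfying `ζ(h₁h₂) = ζ(h₁)^{h₂} · ζ(h₂)`). -/
def DerSet (H : Type*) [Group H] {V : Type*} [Group V] (b : H →* MulAut V) :
    Set (H → V) :=
  {ζ | ∀ h₁ h₂ : H, ζ (h₁ * h₂) = b h₂ (ζ h₁) * ζ h₂}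

/-- The set of inner derivations `h ↦ [h,v] = v^h · v⁻¹`. -/
def IderSet (H : Type*) [Group H] {V : Type*} [Group V] (b : H →* MulAut V) :
    Set (H → V) :=
  {ζ | ∃ v : V, ∀ h : H, ζ h = b h v * v⁻¹}

/-- `m := dim_{End_H(V)} H¹(H,V)` where `H¹(H,V) = Der(H,V)/Ider(H,V)`, characterised by
`|End_H(V)| ^ m · |Ider(H,V)| = |Der(H,V)|`. -/
noncomputable def h1Dim (H : Type*) [Group H] {V : Type*} [Group V]
    (b : H →* MulAut V) : ℕ :=
  sInf {m : ℕ | endCard H b ^ m * Nat.card (IderSet H b) = Nat.card (DerSet H b)}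

/-- The probability that a uniformly random element of `H` fixes a nonzero (i.e.
non-identity) vector of `V`. -/
noncomputable def fixProb (H : Type*) [Group H] {V : Type*} [Group V]
    (b : H →* MulAut V) : ℝ :=
  Nat.card {h : H // ∃ v : V, v ≠ 1 ∧ b h v = v} / (Nat.card H : ℝ)

/-- `A` is a set of representatives for the irreducible `G`-modules which are
`G`-isomorphic to a chief factor of `G` satisfying `P`:  every member of `A` is an
irreducible abelian `G`-group `G`-isomorphic to some chief factor satisfying `P`, and
every chief factor of `G` satisfying `P` is `G`-isomorphic to exactly one member
of `A`. -/
def IsModuleRepSet {G : Type} [Group G] (P : Subgroup G → Subgroup G → Prop)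
    (A : Finset (GGroup G)) : Prop :=
  (∀ V ∈ A, (∀ x y : V.carrier, x * y = y * x) ∧ IsIrreducibleGGroup G V.act ∧
      ∃ X Y : Subgroup G, IsChiefFactorPair G X Y ∧ P X Y ∧ RepresentsFactor G V.act X Y) ∧
  ∀ X Y : Subgroup G, IsChiefFactorPair G X Y → P X Y →
    ∃! V : GGroup G, V ∈ A ∧ RepresentsFactor G V.act X Y

/-- `A` is a set of representatives for the irreducible `G`-groups which are
`G`-equivalent to a chief factor of `G` satisfying `P`. -/
def IsGGroupRepSet {G : Type} [Group G] (P : Subgroup G → Subgroup G → Prop)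
    (A : Finset (GGroup G)) : Prop :=
  (∀ V ∈ A, IsIrreducibleGGroup G V.act ∧
      ∃ X Y : Subgroup G, IsChiefFactorPair G X Y ∧ P X Y ∧ FactorGEquiv X Y V.act) ∧
  ∀ X Y : Subgroup G, IsChiefFactorPair G X Y → P X Y →
    ∃! V : GGroup G, V ∈ A ∧ FactorGEquiv X Y V.act

section ChebAux
open Finset Filter Matrix


lemma span_top_iff_swap_li (K : Type) [Field K] {δ k : ℕ} (f : Fin k → (Fin δ → K)) :
    Submodule.span K (Set.range f) = ⊤ ↔ LinearIndependent K (Function.swap f) := by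
  classical
  set M : Matrix (Fin k) (Fin δ) K := Matrix.of f with hM
  have hrange : Set.range f = Set.range M := rfl
  have hfr : Module.finrank K (Fin δ → K) = δ := by simp
  have h1 : Submodule.span K (Set.range f) = LinearMap.range M.vecMulLinear := by
    rw [hrange, range_vecMulLinear]; rfl
  have h2 : M.vecMulLinear = Mᵀ.mulVecLin := (Matrix.mulVecLin_transpose M).symm
  have hrank : Mᵀ.rank = Module.finrank K (LinearMap.range M.vecMulLinear) := by
    rw [h2, Matrix.rank]
  have hswap : (fun i => Mᵀ i) = Function.swap f := rfl
  have hli : LinearIndependent K (Function.swap f) ↔ M.rank = δ := by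
    rw [show Function.swap f = M.col from rfl, ← Matrix.mulVec_injective_iff]
    have hcoe : M.mulVec = ⇑M.mulVecLin := rfl
    rw [hcoe, ← LinearMap.ker_eq_bot]
    have hrn := LinearMap.finrank_range_add_finrank_ker M.mulVecLin
    rw [hfr] at hrn
    constructor
    · intro h
      rw [h, finrank_bot, Nat.add_zero] at hrn
      rw [Matrix.rank, hrn]
    · intro h
      rw [Matrix.rank] at h
      rw [h] at hrn
      have : Module.finrank K (LinearMap.ker M.mulVecLin) = 0 := by omega
      exact Submodule.finrank_eq_zero.mp this
  rw [h1, hli, ← Matrix.rank_transpose, hrank]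
  constructor
  · intro h; rw [h]; rw [finrank_top, hfr]
  · intro h
    apply Submodule.eq_top_of_finrank_eq
    rw [h, hfr]


lemma card_span_top (K : Type) [Field K] [Fintype K] (δ k : ℕ) :
    Nat.card {f : Fin k → (Fin δ → K) // Submodule.span K (Set.range f) = ⊤} =
      ∏ i ∈ Finset.range δ, (Fintype.card K ^ k - Fintype.card K ^ i) := by
  classical
  have hcard : Nat.card {f : Fin k → (Fin δ → K) // Submodule.span K (Set.range f) = ⊤}
      = Nat.card {g : Fin δ → (Fin k → K) // LinearIndependent K g} :=
    Nat.card_congr (Equiv.subtypeEquiv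
      ⟨Function.swap, Function.swap, fun _ => rfl, fun _ => rfl⟩
      (fun f => span_top_iff_swap_li K f))
  rw [hcard]
  by_cases hk : δ ≤ k
  · have hfr : Module.finrank K (Fin k → K) = k := by simp
    have := card_linearIndependent (K := K) (V := Fin k → K) (k := δ) (by rw [hfr]; exact hk)
    rw [this, hfr, ← Fin.prod_univ_eq_prod_range]
  · have : IsEmpty {g : Fin δ → (Fin k → K) // LinearIndependent K g} := by
      constructor
      rintro ⟨g, hg⟩
      have h1 : δ ≤ Module.finrank K (Fin k → K) := by
        simpa using hg.fintype_card_le_finrank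
      simp at h1
      omega
    rw [Nat.card_of_isEmpty]
    have hmem : k ∈ Finset.range δ := Finset.mem_range.mpr (by omega)
    rw [eq_comm]
    exact Finset.prod_eq_zero hmem (Nat.sub_self _)


lemma closure_range_map_top {G H : Type*} [Group G] [Group H] (e : G ≃* H) {k : ℕ}
    (g : Fin k → G) (h : Subgroup.closure (Set.range g) = ⊤) :
    Subgroup.closure (Set.range fun i => e (g i)) = ⊤ := by
  have h1 : (Set.range fun i => e (g i)) = e.toMonoidHom '' Set.range g := by
    rw [← Set.range_comp]; rfl
  rw [h1, ← MonoidHom.map_closure, h]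
  exact Subgroup.map_top_of_surjective _ e.surjective

lemma invGen_congr {G H : Type*} [Group G] [Group H] (e : G ≃* H) {k : ℕ} (f : Fin k → G) :
    InvGen G f ↔ InvGen H (fun i => e (f i)) := by
  constructor
  · intro h c
    have h2 := closure_range_map_top e _ (h (fun i => e.symm (c i)))
    have h3 : (fun i => e (e.symm (c i) * f i * (e.symm (c i))⁻¹))
        = fun i => c i * e (f i) * (c i)⁻¹ := by
      funext i; simp [_root_.map_mul]
    rwa [h3] at h2
  · intro h c
    have h2 := closure_range_map_top e.symm _ (h (fun i => e (c i)))
    have h3 : (fun i => e.symm (e (c i) * e (f i) * (e (c i))⁻¹))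
        = fun i => c i * f i * (c i)⁻¹ := by
      funext i; simp [_root_.map_mul]
    rwa [h3] at h2

lemma probInvGen_congr {G H : Type*} [Group G] [Group H] (e : G ≃* H) (k : ℕ) :
    probInvGen G k = probInvGen H k := by
  unfold probInvGen
  rw [Nat.card_congr (Equiv.subtypeEquiv (Equiv.piCongrRight fun _ => e.toEquiv)
      (fun f => invGen_congr e f)), Nat.card_congr e.toEquiv]

lemma invGen_iff_closure {H : Type*} [CommGroup H] {k : ℕ} (f : Fin k → H) :
    InvGen H f ↔ Subgroup.closure (Set.range f) = ⊤ := by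
  constructor
  · intro h
    have := h (fun _ => 1)
    simpa using this
  · intro h c
    have h3 : (fun i => c i * f i * (c i)⁻¹) = f := by
      funext i; rw [mul_comm (c i) (f i), mul_inv_cancel_right]
    rwa [h3]

lemma mult_closure_top_iff {p : ℕ} {V : Type*} [AddCommGroup V] [Module (ZMod p) V]
    (S : Set (Multiplicative V)) :
    Subgroup.closure S = ⊤ ↔ Submodule.span (ZMod p) (Multiplicative.toAdd '' S) = ⊤ := by
  constructor
  · intro h
    rw [eq_top_iff]
    rintro v -
    have hv : Multiplicative.ofAdd v ∈ Subgroup.closure S := by rw [h]; trivial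
    refine Subgroup.closure_induction
      (p := fun x _ => Multiplicative.toAdd x ∈ Submodule.span (ZMod p)
        (Multiplicative.toAdd '' S)) ?_ ?_ ?_ ?_ hv
    · intro x hx; exact Submodule.subset_span ⟨x, hx, rfl⟩
    · exact Submodule.zero_mem _
    · intro x y _ _ hx hy; exact Submodule.add_mem _ hx hy
    · intro x _ hx; exact Submodule.neg_mem _ hx
  · intro h
    rw [eq_top_iff]
    rintro x -
    have hv : Multiplicative.toAdd x ∈ Submodule.span (ZMod p)
        (Multiplicative.toAdd '' S) := by rw [h]; trivial
    refine Submodule.span_induction (p := fun v _ => Multiplicative.ofAdd v ∈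
      Subgroup.closure S) ?_ ?_ ?_ ?_ hv
    · rintro v ⟨y, hy, rfl⟩; exact Subgroup.subset_closure hy
    · exact Subgroup.one_mem _
    · intro a b _ _ ha hb; exact Subgroup.mul_mem _ ha hb
    · intro c a _ ha
      -- scalar multiple: c • a with c : ZMod p
      obtain ⟨m, rfl⟩ := ZMod.intCast_surjective c
      rw [show ((m : ZMod p) • a : V) = m • a from Int.cast_smul_eq_zsmul _ m a]
      exact Subgroup.zpow_mem _ ha m


lemma hasSum_cheb_aux (P : ℝ) (hP : 2 ≤ P) (d : ℕ) :
    HasSum (fun k : ℕ => P ^ d / P ^ k * ∏ i ∈ range d, (1 - P ^ i / P ^ k))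
      (P ^ (d + 1) / (P ^ (d + 1) - 1)) := by
  have hP0 : (0:ℝ) < P := lt_of_lt_of_le two_pos hP
  have hP1 : (1:ℝ) < P := lt_of_lt_of_le one_lt_two hP
  have hPne : P ≠ 0 := ne_of_gt hP0
  have hpowpos : ∀ m : ℕ, (0:ℝ) < P ^ m := fun m => pow_pos hP0 m
  have hPd1 : (1:ℝ) < P ^ (d + 1) := one_lt_pow₀ hP1 (Nat.succ_ne_zero d)
  set c : ℕ → ℝ := fun k => P ^ d / P ^ k * ∏ i ∈ range d, (1 - P ^ i / P ^ k) with hc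
  set t : ℕ → ℝ := fun k => ∏ i ∈ range (d + 1), (1 - P ^ i / P ^ k) with ht
  have hnonneg : ∀ k, 0 ≤ c k := by
    intro k
    rcases lt_or_ge k d with hkd | hkd
    · have : (1 - P ^ k / P ^ k) = 0 := by
        rw [div_self (ne_of_gt (hpowpos k))]; ring
      rw [hc]
      simp only
      rw [Finset.prod_eq_zero (Finset.mem_range.mpr hkd) this, mul_zero]
    · apply mul_nonneg (le_of_lt (div_pos (hpowpos d) (hpowpos k)))
      apply Finset.prod_nonneg
      intro i hi
      have : P ^ i ≤ P ^ k :=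
        pow_le_pow_right₀ (le_of_lt hP1) (le_trans (le_of_lt (Finset.mem_range.mp hi)) hkd)
      have := div_le_one_of_le₀ this (le_of_lt (hpowpos k))
      linarith
  have hshift : ∀ i k : ℕ, P ^ (i + 1) / P ^ (k + 1) = P ^ i / P ^ k := by
    intro i k
    rw [pow_succ, pow_succ, mul_div_mul_right _ _ hPne]
  have hstep : ∀ k, t (k + 1) - t k = c k * (1 - 1 / P ^ (d + 1)) := by
    intro k
    have h1 : t (k + 1) = (∏ i ∈ range d, (1 - P ^ i / P ^ k)) * (1 - 1 / P ^ (k + 1)) := by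
      rw [ht]
      simp only
      have hprod : (∏ i ∈ range d, (1 - P ^ (i+1) / P ^ (k+1)))
          = ∏ i ∈ range d, (1 - P ^ i / P ^ k) :=
        Finset.prod_congr rfl fun i _ => by rw [hshift]
      rw [Finset.prod_range_succ', pow_zero, hprod]
    have h2 : t k = (∏ i ∈ range d, (1 - P ^ i / P ^ k)) * (1 - P ^ d / P ^ k) := by
      rw [ht]; simp only; rw [Finset.prod_range_succ]
    rw [h1, h2, hc]
    simp only
    have hkne : (P:ℝ) ^ k ≠ 0 := ne_of_gt (hpowpos k)
    have hk1ne : (P:ℝ) ^ (k+1) ≠ 0 := ne_of_gt (hpowpos (k+1))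
    have hd1ne : (P:ℝ) ^ (d+1) ≠ 0 := ne_of_gt (hpowpos (d+1))
    field_simp
    ring
  have hpartial : ∀ K : ℕ, ∑ k ∈ range K, c k = t K * (P ^ (d + 1) / (P ^ (d + 1) - 1)) := by
    intro K
    have h1 : ∑ k ∈ range K, (t (k + 1) - t k) = t K - t 0 := Finset.sum_range_sub t K
    have ht0 : t 0 = 0 := by
      rw [ht]
      simp only
      apply Finset.prod_eq_zero (Finset.mem_range.mpr (Nat.succ_pos d) : 0 ∈ range (d+1))
      norm_num
    rw [ht0, sub_zero] at h1
    have h2 : ∑ k ∈ range K, (t (k + 1) - t k) = (∑ k ∈ range K, c k) * (1 - 1 / P ^ (d + 1)) := by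
      rw [Finset.sum_mul]
      exact Finset.sum_congr rfl fun k _ => hstep k
    have h3 : (1 : ℝ) - 1 / P ^ (d + 1) ≠ 0 := by
      have : 1 / P ^ (d+1) < 1 := by
        rw [div_lt_one (hpowpos (d+1))]; exact hPd1
      linarith
    have h4 : (∑ k ∈ range K, c k) = t K / (1 - 1 / P ^ (d + 1)) := by
      rw [← h1, h2, mul_div_assoc, div_self h3, mul_one]
    have hx : (1 : ℝ) - 1 / P ^ (d+1) = (P ^ (d+1) - 1) / P ^ (d+1) := by
      field_simp
    rw [h4, hx, div_div_eq_mul_div, mul_div_assoc]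
  have hlim : Tendsto t atTop (nhds 1) := by
    have : Tendsto (fun k : ℕ => ∏ i ∈ range (d+1), (1 - P ^ i / P ^ k)) atTop
        (nhds (∏ i ∈ range (d+1), (1:ℝ))) := by
      apply tendsto_finset_prod
      intro i _
      have h0 : Tendsto (fun k : ℕ => P ^ i * (1 / P) ^ k) atTop (nhds 0) := by
        rw [show (0:ℝ) = P ^ i * 0 by ring]
        apply Tendsto.const_mul
        apply tendsto_pow_atTop_nhds_zero_of_lt_one
        · positivity
        · rw [div_lt_one hP0]; linarith
      have heq : (fun k : ℕ => P ^ i * (1 / P) ^ k) = fun k : ℕ => P ^ i / P ^ k := by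
        funext k; rw [div_pow, one_pow]; ring
      rw [heq] at h0
      have := Tendsto.const_sub (1:ℝ) h0
      simpa using this
    simpa using this
  rw [hasSum_iff_tendsto_nat_of_nonneg hnonneg]
  have : Tendsto (fun K => t K * (P ^ (d + 1) / (P ^ (d + 1) - 1))) atTop
      (nhds (1 * (P ^ (d + 1) / (P ^ (d + 1) - 1)))) := hlim.mul_const _
  rw [one_mul] at this
  simpa only [hpartial] using this

lemma hasSum_cheb (P : ℝ) (hP : 2 ≤ P) (δ : ℕ) :
    HasSum (fun k : ℕ => 1 - ∏ i ∈ range δ, (1 - P ^ i / P ^ k))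
      (∑ d ∈ range δ, P ^ (d + 1) / (P ^ (d + 1) - 1)) := by
  have key : ∀ k : ℕ, 1 - ∏ i ∈ range δ, (1 - P ^ i / P ^ k)
      = ∑ d ∈ range δ, (P ^ d / P ^ k * ∏ i ∈ range d, (1 - P ^ i / P ^ k)) := by
    intro k
    have h2 : ∀ d : ℕ, P ^ d / P ^ k * ∏ i ∈ range d, (1 - P ^ i / P ^ k)
        = -((∏ i ∈ range (d+1), (1 - P ^ i / P ^ k)) - ∏ i ∈ range d, (1 - P ^ i / P ^ k)) := by
      intro d; rw [Finset.prod_range_succ]; ring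
    have h3 := Finset.sum_range_sub (fun d => ∏ i ∈ range d, (1 - P ^ i / P ^ k)) δ
    simp only [h2]
    rw [Finset.sum_neg_distrib, h3]
    simp
  have H := hasSum_sum (f := fun d (k : ℕ) => P ^ d / P ^ k * ∏ i ∈ range d, (1 - P ^ i / P ^ k))
    (s := range δ) (a := fun d => P ^ (d + 1) / (P ^ (d + 1) - 1))
    (fun d _ => hasSum_cheb_aux P hP d)
  have heq : (fun k : ℕ => 1 - ∏ i ∈ range δ, (1 - P ^ i / P ^ k))
      = fun k : ℕ => ∑ d ∈ range δ, (P ^ d / P ^ k * ∏ i ∈ range d, (1 - P ^ i / P ^ k)) :=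
    funext key
  rw [heq]
  exact H


lemma sum_reflect_eq (P : ℝ) (hP : 1 < P) (δ : ℕ) :
    ∑ i ∈ range δ, P ^ δ / (P ^ δ - P ^ i)
      = ∑ d ∈ range δ, P ^ (d + 1) / (P ^ (d + 1) - 1) := by
  have hP0 : (0:ℝ) < P := lt_trans one_pos hP
  rw [← Finset.sum_range_reflect]
  apply Finset.sum_congr rfl
  intro j hj
  have hjδ : j < δ := Finset.mem_range.mp hj
  have hlt : P ^ (δ - 1 - j) < P ^ δ := pow_lt_pow_right₀ hP (by omega)
  have h1 : P ^ δ - P ^ (δ - 1 - j) ≠ 0 := by linarith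
  have h2 : P ^ (j + 1) - 1 ≠ 0 := by
    have : (1:ℝ) < P ^ (j+1) := one_lt_pow₀ hP (Nat.succ_ne_zero j)
    linarith
  rw [div_eq_div_iff h1 h2]
  have hexp : P ^ (δ - 1 - j) * P ^ (j + 1) = P ^ δ := by
    rw [← pow_add]
    congr 1
    omega
  linear_combination hexp

lemma term_split (P : ℝ) (hP : 2 ≤ P) (δ : ℕ) :
    ∑ d ∈ range δ, P ^ (d + 1) / (P ^ (d + 1) - 1)
      = δ + ∑ d ∈ range δ, 1 / (P ^ (d + 1) - 1) := by
  have hP1 : (1:ℝ) < P := by linarith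
  rw [Finset.sum_congr rfl (g := fun d => 1 + 1 / (P ^ (d+1) - 1)) ?_]
  · rw [Finset.sum_add_distrib]
    simp [Finset.card_range]
  · intro d _
    have h : P ^ (d+1) - 1 ≠ 0 := by
      have : (1:ℝ) < P ^ (d+1) := one_lt_pow₀ hP1 (Nat.succ_ne_zero d)
      linarith
    field_simp
    ring

lemma tail_bound_ge3 (P : ℝ) (hP : 3 ≤ P) (δ : ℕ) :
    ∑ d ∈ range δ, 1 / (P ^ (d + 1) - 1) ≤ 3 / 4 * (1 - (1 / P) ^ δ) := by
  have hP0 : (0:ℝ) < P := by linarith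
  induction δ with
  | zero => simp
  | succ n ih =>
    rw [Finset.sum_range_succ]
    have hkey : 1 / (P ^ (n + 1) - 1) ≤ 3 / 4 * ((1/P) ^ n - (1/P) ^ (n+1)) := by
      have hpow : (3:ℝ) ≤ P ^ (n+1) := le_trans hP (le_self_pow₀ (by linarith) (Nat.succ_ne_zero n))
      have h1 : (0:ℝ) < P ^ (n+1) - 1 := by linarith
      have h2 : (1/P) ^ n - (1/P) ^ (n+1) = (P - 1) / P ^ (n+1) := by
        rw [div_pow, div_pow, one_pow, one_pow, pow_succ]
        field_simp
      rw [h2, ← mul_div_assoc, div_le_div_iff₀ h1 (pow_pos hP0 (n+1))]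
      nlinarith [pow_pos hP0 (n+1)]
    calc _ ≤ 3 / 4 * (1 - (1/P) ^ n) + 3 / 4 * ((1/P) ^ n - (1/P) ^ (n+1)) := by
            exact add_le_add ih hkey
      _ = 3 / 4 * (1 - (1/P) ^ (n+1)) := by ring

lemma tail_bound_two (δ : ℕ) (hδ : 2 ≤ δ) :
    ∑ d ∈ range δ, 1 / ((2:ℝ) ^ (d + 1) - 1) ≤ 34 / 21 - 8 / 7 * (1 / 2) ^ δ := by
  induction δ, hδ using Nat.le_induction with
  | base =>
    rw [Finset.sum_range_succ, Finset.sum_range_succ, Finset.sum_range_zero]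
    norm_num
  | succ n hn ih =>
    rw [Finset.sum_range_succ]
    have hkey : 1 / ((2:ℝ) ^ (n + 1) - 1) ≤ 8 / 7 * ((1/2) ^ n - (1/2) ^ (n+1)) := by
      have hpow : (8:ℝ) ≤ 2 ^ (n+1) := by
        calc (8:ℝ) = 2 ^ 3 := by norm_num
          _ ≤ 2 ^ (n+1) := pow_le_pow_right₀ (by norm_num) (by omega)
      have h1 : (0:ℝ) < 2 ^ (n+1) - 1 := by linarith
      have h2 : ((1:ℝ)/2) ^ n - (1/2) ^ (n+1) = 1 / 2 ^ (n+1) := by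
        rw [div_pow, div_pow, one_pow, one_pow, pow_succ]
        field_simp
        norm_num
      rw [h2, ← mul_div_assoc, div_le_div_iff₀ h1 (by positivity : (0:ℝ) < 2 ^ (n+1))]
      nlinarith
    calc _ ≤ (34 / 21 - 8 / 7 * (1/2) ^ n) + 8 / 7 * ((1/2) ^ n - (1/2) ^ (n+1)) :=
            add_le_add ih hkey
      _ = 34 / 21 - 8 / 7 * (1/2) ^ (n+1) := by ring

lemma sq_bound_two (δ : ℕ) (hδ : 3 ≤ δ) :
    ((δ : ℝ) + 34 / 21) ^ 2 < 25 / 9 * 2 ^ δ := by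
  induction δ, hδ using Nat.le_induction with
  | base => norm_num
  | succ n hn ih =>
    have hn3 : (3:ℝ) ≤ (n:ℝ) := by exact_mod_cast hn
    have : ((n:ℝ) + 1 + 34 / 21) ^ 2 ≤ 2 * ((n:ℝ) + 34 / 21) ^ 2 := by nlinarith
    push_cast
    calc ((n:ℝ) + 1 + 34 / 21) ^ 2 ≤ 2 * ((n:ℝ) + 34 / 21) ^ 2 := this
      _ < 2 * (25 / 9 * 2 ^ n) := by nlinarith
      _ = 25 / 9 * 2 ^ (n + 1) := by ring

lemma sq_bound_ge3 (δ : ℕ) (hδ : 1 ≤ δ) :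
    ((δ : ℝ) + 3 / 4) ^ 2 < 25 / 9 * 3 ^ δ := by
  induction δ, hδ using Nat.le_induction with
  | base => norm_num
  | succ n hn ih =>
    have hn1 : (1:ℝ) ≤ (n:ℝ) := by exact_mod_cast hn
    have : ((n:ℝ) + 1 + 3 / 4) ^ 2 ≤ 3 * ((n:ℝ) + 3 / 4) ^ 2 := by nlinarith
    push_cast
    calc ((n:ℝ) + 1 + 3 / 4) ^ 2 ≤ 3 * ((n:ℝ) + 3 / 4) ^ 2 := this
      _ < 3 * (25 / 9 * 3 ^ n) := by nlinarith
      _ = 25 / 9 * 3 ^ (n + 1) := by ring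

lemma card_invGen (p δ k : ℕ) [Fact p.Prime] :
    Nat.card {f : Fin k → Multiplicative (Fin δ → ZMod p) // InvGen _ f}
      = ∏ i ∈ range δ, (p ^ k - p ^ i) := by
  have hiff : ∀ f : Fin k → Multiplicative (Fin δ → ZMod p),
      InvGen _ f ↔ Submodule.span (ZMod p)
        (Set.range fun i => Multiplicative.toAdd (f i)) = ⊤ := by
    intro f
    rw [invGen_iff_closure, mult_closure_top_iff (p := p),
      show (Multiplicative.toAdd '' Set.range f)
        = Set.range fun i => Multiplicative.toAdd (f i) from (Set.range_comp _ _).symm]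
  have hc := Nat.card_congr (Equiv.subtypeEquiv
    (q := fun g : Fin k → (Fin δ → ZMod p) => Submodule.span (ZMod p) (Set.range g) = ⊤)
    (Equiv.piCongrRight fun _ : Fin k =>
      (Multiplicative.toAdd : Multiplicative (Fin δ → ZMod p) ≃ (Fin δ → ZMod p))) hiff)
  rw [hc, card_span_top, ZMod.card p]

lemma probInvGen_formula {G : Type} [Group G] (p δ : ℕ) (hp : p.Prime)
    (e : G ≃* Multiplicative (Fin δ → ZMod p)) (k : ℕ) :
    probInvGen G k = ∏ i ∈ range δ, (1 - (p:ℝ) ^ i / (p:ℝ) ^ k) := by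
  haveI : Fact p.Prime := ⟨hp⟩
  have hp1 : 1 < p := hp.one_lt
  have hP1 : (1:ℝ) < (p:ℝ) := by exact_mod_cast hp1
  have hPk : ((p:ℝ)) ^ k ≠ 0 := by positivity
  rw [probInvGen_congr e, probInvGen, card_invGen]
  have hcardA : (Nat.card (Multiplicative (Fin δ → ZMod p)) : ℝ) = (p:ℝ) ^ δ := by
    rw [Nat.card_congr (Multiplicative.toAdd), Nat.card_pi]
    simp [Nat.card_zmod]
  rw [hcardA]
  have hcast : ((∏ i ∈ range δ, (p ^ k - p ^ i) : ℕ) : ℝ)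
      = ∏ i ∈ range δ, ((p:ℝ) ^ k - (p:ℝ) ^ i) := by
    by_cases hkδ : k < δ
    · have hz : (∏ i ∈ range δ, (p ^ k - p ^ i)) = 0 :=
        Finset.prod_eq_zero (Finset.mem_range.mpr hkδ) (Nat.sub_self _)
      rw [hz, Nat.cast_zero, eq_comm]
      exact Finset.prod_eq_zero (Finset.mem_range.mpr hkδ) (sub_self _)
    · rw [Nat.cast_prod]
      apply Finset.prod_congr rfl
      intro i hi
      have hik : i ≤ k := by
        have := Finset.mem_range.mp hi; omega
      have h1 : p ^ i ≤ p ^ k := Nat.pow_le_pow_right hp.pos hik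
      push_cast [Nat.cast_sub h1]
      ring
  rw [hcast]
  have hpow : ((p:ℝ) ^ δ) ^ k = ∏ _i ∈ range δ, (p:ℝ) ^ k := by
    rw [Finset.prod_const, Finset.card_range, ← pow_mul, ← pow_mul, mul_comm]
  rw [hpow, ← Finset.prod_div_distrib]
  apply Finset.prod_congr rfl
  intro i _
  rw [sub_div, div_self hPk]

lemma cheb_formula {G : Type} [Group G] (p δ : ℕ) (hp : p.Prime)
    (e : G ≃* Multiplicative (Fin δ → ZMod p)) :
    cheb G = ∑ i ∈ range δ, (p:ℝ) ^ δ / ((p:ℝ) ^ δ - (p:ℝ) ^ i) := by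
  have hP2 : (2:ℝ) ≤ (p:ℝ) := by exact_mod_cast hp.two_le
  have H := hasSum_cheb (p:ℝ) hP2 δ
  rw [cheb]
  have heq : (fun k : ℕ => 1 - probInvGen G k)
      = fun k : ℕ => 1 - ∏ i ∈ range δ, (1 - (p:ℝ) ^ i / (p:ℝ) ^ k) := by
    funext k; rw [probInvGen_formula p δ hp e k]
  rw [heq, H.tsum_eq, sum_reflect_eq (p:ℝ) (by linarith) δ]

lemma lt_helper (L N : ℝ) (hL : 0 ≤ L) (h : L ^ 2 < 25 / 9 * N) :
    L < 5 / 3 * Real.sqrt N := by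
  have h53 : (5/3:ℝ) * Real.sqrt N = Real.sqrt (25 / 9 * N) := by
    rw [Real.sqrt_mul (by norm_num : (0:ℝ) ≤ 25/9),
      show (25/9:ℝ) = (5/3)^2 by norm_num, Real.sqrt_sq (by norm_num : (0:ℝ) ≤ 5/3)]
  rw [h53]
  exact (Real.lt_sqrt hL).mpr h

lemma final_ineq (p δ : ℕ) (hp : p.Prime) :
    (∑ d ∈ range δ, ((p:ℝ)) ^ (d+1) / ((p:ℝ) ^ (d+1) - 1)) ≤ 5 / 3 * Real.sqrt ((p:ℝ) ^ δ) ∧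
    ((∑ d ∈ range δ, ((p:ℝ)) ^ (d+1) / ((p:ℝ) ^ (d+1) - 1)) = 5 / 3 * Real.sqrt ((p:ℝ) ^ δ)
      ↔ (p = 2 ∧ δ = 2)) := by
  have hP2 : (2:ℝ) ≤ (p:ℝ) := by exact_mod_cast hp.two_le
  have heqcase : (p = 2 ∧ δ = 2) →
      (∑ d ∈ range δ, ((p:ℝ)) ^ (d+1) / ((p:ℝ) ^ (d+1) - 1))
        = 5 / 3 * Real.sqrt ((p:ℝ) ^ δ) := by
    rintro ⟨rfl, rfl⟩
    rw [Finset.sum_range_succ, Finset.sum_range_succ, Finset.sum_range_zero]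
    rw [show ((2:ℕ):ℝ) ^ (2:ℕ) = 2 ^ 2 by push_cast; ring]
    rw [show ((2:ℝ) ^ 2 : ℝ) = 4 by norm_num, show Real.sqrt 4 = 2 by
      rw [show (4:ℝ) = 2 ^ 2 by norm_num, Real.sqrt_sq (by norm_num : (0:ℝ) ≤ 2)]]
    push_cast
    norm_num
  have hstrict : ¬(p = 2 ∧ δ = 2) →
      (∑ d ∈ range δ, ((p:ℝ)) ^ (d+1) / ((p:ℝ) ^ (d+1) - 1))
        < 5 / 3 * Real.sqrt ((p:ℝ) ^ δ) := by
    intro hne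
    have hsum : (∑ d ∈ range δ, ((p:ℝ)) ^ (d+1) / ((p:ℝ) ^ (d+1) - 1))
        = δ + ∑ d ∈ range δ, 1 / ((p:ℝ) ^ (d+1) - 1) := term_split (p:ℝ) hP2 δ
    rcases Nat.eq_zero_or_pos δ with hδ0 | hδpos
    · subst hδ0
      simp only [Finset.range_zero, Finset.sum_empty, pow_zero, Real.sqrt_one]
      norm_num
    by_cases hp2 : p = 2
    · subst hp2
      have hPcast : ((2:ℕ):ℝ) = (2:ℝ) := by norm_num
      rw [hPcast] at hsum ⊢
      match δ, hδpos with
      | 1, _ =>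
        rw [hsum]
        rw [Finset.sum_range_succ, Finset.sum_range_zero]
        apply lt_helper _ _ (by norm_num)
        norm_num
      | 2, _ => exact absurd ⟨rfl, rfl⟩ hne
      | (n+3), _ =>
        set m : ℕ := n + 3 with hm
        have hm3 : 3 ≤ m := by omega
        have hb : (∑ d ∈ range m, 1 / ((2:ℝ) ^ (d+1) - 1)) ≤ 34 / 21 := by
          have := tail_bound_two m (by omega)
          have hpw : (0:ℝ) ≤ 8 / 7 * (1/2) ^ m := by positivity
          linarith
        have hL : (∑ d ∈ range m, ((2:ℝ)) ^ (d+1) / ((2:ℝ) ^ (d+1) - 1)) ≤ (m:ℝ) + 34/21 := by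
          rw [hsum]; linarith
        calc (∑ d ∈ range m, ((2:ℝ)) ^ (d+1) / ((2:ℝ) ^ (d+1) - 1)) ≤ (m:ℝ) + 34/21 := hL
          _ < 5 / 3 * Real.sqrt ((2:ℝ) ^ m) :=
            lt_helper _ _ (by positivity) (sq_bound_two m hm3)
    · have hp3 : 3 ≤ p := by
        have := hp.two_le; omega
      have hP3 : (3:ℝ) ≤ (p:ℝ) := by exact_mod_cast hp3
      have hb : (∑ d ∈ range δ, 1 / ((p:ℝ) ^ (d+1) - 1)) ≤ 3/4 := by
        have := tail_bound_ge3 (p:ℝ) hP3 δ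
        have hpw : (0:ℝ) ≤ (1/(p:ℝ)) ^ δ := by positivity
        nlinarith
      have hL : (∑ d ∈ range δ, ((p:ℝ)) ^ (d+1) / ((p:ℝ) ^ (d+1) - 1)) ≤ (δ:ℝ) + 3/4 := by
        rw [hsum]; linarith
      have h3p : (3:ℝ) ^ δ ≤ (p:ℝ) ^ δ := pow_le_pow_left₀ (by norm_num) hP3 δ
      calc (∑ d ∈ range δ, ((p:ℝ)) ^ (d+1) / ((p:ℝ) ^ (d+1) - 1)) ≤ (δ:ℝ) + 3/4 := hL
        _ < 5 / 3 * Real.sqrt ((p:ℝ) ^ δ) := by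
          apply lt_helper _ _ (by positivity)
          calc ((δ:ℝ) + 3/4) ^ 2 < 25 / 9 * 3 ^ δ := sq_bound_ge3 δ hδpos
            _ ≤ 25 / 9 * (p:ℝ) ^ δ := by nlinarith
  constructor
  · by_cases h : p = 2 ∧ δ = 2
    · exact le_of_eq (heqcase h)
    · exact le_of_lt (hstrict h)
  · constructor
    · intro h
      by_contra hne
      exact absurd h (ne_of_lt (hstrict hne))
    · exact heqcase


end ChebAux

/-- **Lemma 5.3**: if `G ≅ C_p^δ` is elementary abelian of rank `δ`, then
`C(G) = Σ_{0≤i≤δ-1} p^δ/(p^δ - p^i)`, `C(G) ≤ (5/3)·√|G|`, and equality holds if and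
only if `G ≅ C₂ × C₂`. -/
theorem chebotarev_elementary_abelian (p : ℕ) (hp : p.Prime) (δ : ℕ)
    (G : Type) [Group G] [Finite G]
    (hG : Nonempty (G ≃* Multiplicative (Fin δ → ZMod p))) :
    cheb G = (∑ i ∈ Finset.range δ,
        (p : ℝ) ^ δ / ((p : ℝ) ^ δ - (p : ℝ) ^ i)) ∧
    cheb G ≤ 5 / 3 * Real.sqrt (Nat.card G) ∧
    (cheb G = 5 / 3 * Real.sqrt (Nat.card G) ↔
      Nonempty (G ≃* Multiplicative (ZMod 2 × ZMod 2))) := by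
  obtain ⟨e⟩ := hG
  haveI : Fact p.Prime := ⟨hp⟩
  have hcardG : Nat.card G = p ^ δ := by
    rw [Nat.card_congr e.toEquiv, Nat.card_congr (Multiplicative.toAdd), Nat.card_pi]
    simp [Nat.card_zmod]
  have hcast : ((Nat.card G : ℕ) : ℝ) = (p:ℝ) ^ δ := by
    rw [hcardG]; push_cast; ring
  have hform := cheb_formula p δ hp e
  have hineq := final_ineq p δ hp
  have hrefl := sum_reflect_eq (p:ℝ) (by exact_mod_cast hp.one_lt) δ
  refine ⟨hform, ?_, ?_⟩
  · rw [hform, hcast, hrefl]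
    exact hineq.1
  · rw [hform, hcast, hrefl]
    constructor
    · intro h
      obtain ⟨hp2, hδ2⟩ := hineq.2.mp h
      subst hp2; subst hδ2
      refine ⟨e.trans (AddEquiv.toMultiplicative ?_)⟩
      exact { piFinTwoEquiv (fun _ => ZMod 2) with map_add' := fun _ _ => rfl }
    · rintro ⟨e2⟩
      apply hineq.2.mpr
      have hc4 : Nat.card G = 4 := by
        rw [Nat.card_congr e2.toEquiv, Nat.card_congr (Multiplicative.toAdd), Nat.card_prod]
        simp [Nat.card_zmod]
      have hpδ : p ^ δ = 4 := by rw [← hcardG, hc4]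
      have hδ0 : δ ≠ 0 := by
        rintro rfl; simp at hpδ
      have hple : p ≤ 4 := Nat.le_of_dvd (by norm_num) (hpδ ▸ dvd_pow_self p hδ0)
      have hp2 : p = 2 := by
        have h2 := hp.two_le
        interval_cases p
        · rfl
        · exfalso
          have h34 : (3:ℕ) ∣ 4 := hpδ ▸ dvd_pow_self 3 hδ0
          norm_num at h34
        · exact absurd hp (by norm_num)
      subst hp2
      have hδ2 : δ = 2 := by
        have : (2:ℕ) ^ δ = 2 ^ 2 := by omega
        exact Nat.pow_right_injective (le_refl 2) this
      exact ⟨rfl, hδ2⟩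


end ChebotarevPaper
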